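/- Let H be a subgroup of order u of a finite additive group G of order v, and let F be a resolvable (G, H, K', 1) relative difference family. Then P = {B + h : B ∈ F, h ∈ H} ∪ {H} is a (G, u·K' ∪ {u}, u) partitioned difference family: the blocks of P partition G and their combined difference multisets cover every nonzero element of G exactly u times. -/
import Mathlib

/-- The multiset of differences of a multisubset `B` of an additive group:
all differences `x - y` over ordered pairs of distinct positions of `B`. -/
def mDiffs {G : Type*} [AddGroup G] [DecidableEq G] (B : Multiset G) : Multiset G :=
  B.bind fun x => (B.erase x).map fun y => x - y

section helpers
variable {G : Type*} [AddGroup G] [DecidableEq G]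

lemma count_map_sub (x g : G) (t : Multiset G) :
    (t.map fun y => x - y).count g = t.count (-g + x) := by
  have hinj : Function.Injective (fun y => x - y : G → G) := fun a b hab => by
    simpa [sub_eq_add_neg] using hab
  have h : x - (-g + x) = g := by
    simp [sub_eq_add_neg, neg_add_rev, ← add_assoc]
  conv_lhs => rw [← h]
  exact Multiset.count_map_eq_count' _ t hinj _

lemma count_map_add (h g : G) (t : Multiset G) :
    (t.map (· + h)).count g = t.count (g - h) := by
  have hinj : Function.Injective ((· + h) : G → G) := add_left_injective h
  have e : g - h + h = g := sub_add_cancel g h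
  conv_lhs => rw [← e]
  exact Multiset.count_map_eq_count' _ t hinj _

lemma mDiffs_map_add (m : Multiset G) (h : G) : mDiffs (m.map (· + h)) = mDiffs m := by
  have hinj : Function.Injective ((· + h) : G → G) := add_left_injective h
  unfold mDiffs
  rw [Multiset.bind_map]
  congr 1
  funext b
  rw [← Multiset.map_erase _ hinj, Multiset.map_map]
  congr 1
  funext y
  show b + h - (y + h) = b - y
  simp [sub_eq_add_neg, neg_add_rev, add_assoc]

lemma count_mDiffs (m : Multiset G) (g : G) :
    (mDiffs m).count g = (m.map fun x => (m.erase x).count (-g + x)).sum := by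
  unfold mDiffs
  rw [Multiset.count_bind]
  congr 1
  apply Multiset.map_congr rfl
  intro x _
  exact count_map_sub x g _

lemma filter_bind' {α β : Type*} (p : β → Prop) [DecidablePred p]
    (s : Multiset α) (f : α → Multiset β) :
    (s.bind f).filter p = s.bind fun a => (f a).filter p := by
  induction s using Multiset.induction with
  | empty => simp
  | cons a t ih => simp [Multiset.cons_bind, Multiset.filter_add, ih]

lemma sum_count_coset (H : AddSubgroup G) [DecidablePred (· ∈ H)] [Fintype G]
    (m : Multiset G) (x : G) :
    ((Finset.univ.filter fun h => h ∈ H).val.map fun h => m.count (x - h)).sum =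
      Multiset.card (m.filter fun y => -x + y ∈ H) := by
  induction m using Multiset.induction with
  | empty => simp
  | cons a t ih =>
    rw [Multiset.filter_cons]
    simp only [Multiset.count_cons, Multiset.sum_map_add, ih, Multiset.card_add]
    have key : ((Finset.univ.filter fun h => h ∈ H).val.map
        fun h => if x - h = a then 1 else 0).sum = if -x + a ∈ H then 1 else 0 := by
      have hc : ∀ h : G, (x - h = a) ↔ (h = -a + x) := by
        intro h
        constructor
        · intro e; rw [← e]; simp [sub_eq_add_neg, neg_add_rev, ← add_assoc]
        · intro e; rw [e]; simp [sub_eq_add_neg, neg_add_rev, ← add_assoc]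
      simp only [hc]
      rw [show ((Finset.univ.filter fun h => h ∈ H).val.map
          fun h => if h = -a + x then 1 else 0).sum
          = ∑ h ∈ (Finset.univ.filter fun h => h ∈ H), (if h = -a + x then 1 else 0) from rfl]
      rw [Finset.sum_ite_eq' (Finset.univ.filter fun h => h ∈ H) (-a + x) (fun _ => 1)]
      have : (-a + x ∈ Finset.univ.filter fun h => h ∈ H) ↔ (-x + a ∈ H) := by
        simp only [Finset.mem_filter, Finset.mem_univ, true_and]
        constructor
        · intro hh; simpa [neg_add_rev] using H.neg_mem hh
        · intro hh; simpa [neg_add_rev] using H.neg_mem hh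
      simp [this]
    rw [key]
    split_ifs <;> simp [add_comm]

lemma count_mDiffs_subgroup (H : AddSubgroup G) [DecidablePred (· ∈ H)] [Fintype G]
    {g : G} (hg : g ≠ 0) :
    (mDiffs (Finset.univ.filter fun h => h ∈ H).val).count g =
      if g ∈ H then (Finset.univ.filter fun h => h ∈ H).card else 0 := by
  set Hf : Finset G := Finset.univ.filter fun h => h ∈ H with hHf
  have hmem : ∀ y : G, y ∈ Hf.val ↔ y ∈ H := by
    intro y; simp [hHf]
  rw [count_mDiffs]
  by_cases hgH : g ∈ H
  · rw [if_pos hgH]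
    have : Hf.val.map (fun x => (Hf.val.erase x).count (-g + x)) =
        Hf.val.map (fun _ => 1) := by
      apply Multiset.map_congr rfl
      intro x hx
      have hxH : x ∈ H := (hmem x).1 hx
      have hne : -g + x ≠ x := by
        intro e
        apply hg
        have : -g = 0 := by
          have := add_right_cancel (a := -g) (b := x) (c := 0) (by simpa using e)
          simpa using this
        simpa using congrArg Neg.neg this
      rw [Multiset.count_erase_of_ne hne]
      exact Multiset.count_eq_one_of_mem Hf.nodup ((hmem _).2 (H.add_mem (H.neg_mem hgH) hxH))
    rw [this, Multiset.map_const', Multiset.sum_replicate, smul_eq_mul, mul_one]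
    rfl
  · rw [if_neg hgH]
    have : Hf.val.map (fun x => (Hf.val.erase x).count (-g + x)) =
        Hf.val.map (fun _ => 0) := by
      apply Multiset.map_congr rfl
      intro x hx
      have hxH : x ∈ H := (hmem x).1 hx
      apply Multiset.count_eq_zero_of_notMem
      intro hmem'
      have : -g + x ∈ H := (hmem _).1 (Multiset.mem_of_mem_erase hmem')
      exact hgH (by simpa using H.neg_mem (H.add_mem this (H.neg_mem hxH)))
    rw [this]
    simp

end helpers

/-- If `F` is a resolvable `(G, H, K', 1)` relative difference family (the multiset
union of its blocks is a complete system of representatives for the nontrivial left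
cosets of `H`), then `P = {B + h : B ∈ F, h ∈ H} ∪ {H}` is a `(G, u·K' ∪ {u}, u)`
partitioned difference family, where `u = |H|`: the blocks of `P` partition `G` and
their combined difference multisets cover every nonzero element of `G` exactly `u`
times. -/
theorem resolvable_df_gives_pdf {G : Type*} [AddGroup G] [Fintype G] [DecidableEq G]
    (H : AddSubgroup G) [DecidablePred (· ∈ H)]
    (F : Multiset (Finset G))
    (hDF : ∀ g : G, ((F.bind fun B => mDiffs B.val).count g) = if g ∈ H then 0 else 1)
    (hres : ∀ g : G,
      Multiset.card ((F.bind Finset.val).filter fun x => -g + x ∈ H) =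
        if g ∈ H then 0 else 1) :
    (((F.bind fun B => (Finset.univ.filter fun h => h ∈ H).val.map fun h =>
        B.image (· + h)) + {Finset.univ.filter fun h => h ∈ H}).bind Finset.val) =
      (Finset.univ.val : Multiset G) ∧
    ∀ g : G, g ≠ 0 →
      ((((F.bind fun B => (Finset.univ.filter fun h => h ∈ H).val.map fun h =>
        B.image (· + h)) + {Finset.univ.filter fun h => h ∈ H}).bind fun C =>
          mDiffs C.val).count g) = Fintype.card H := by
  have himg : ∀ (B : Finset G) (h : G), (B.image (· + h)).val = B.val.map (· + h) := by
    intro B h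
    exact Finset.image_val_of_injOn ((add_left_injective h).injOn)
  have hcardH : Fintype.card H = (Finset.univ.filter fun h => h ∈ H).card := by
    rw [Fintype.card_subtype]
  constructor
  · refine Multiset.ext.mpr fun x => ?_
    rw [Multiset.add_bind, Multiset.singleton_bind, Multiset.count_add,
      Multiset.bind_assoc]
    simp only [Multiset.bind_map]
    have h1 : ((F.bind fun B => (Finset.univ.filter fun h => h ∈ H).val.bind
        fun h => (B.image (· + h)).val).count x) = if x ∈ H then 0 else 1 := by
      rw [Multiset.count_bind]
      have : F.map (fun B => ((Finset.univ.filter fun h => h ∈ H).val.bind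
          fun h => (B.image (· + h)).val).count x)
          = F.map (fun B => Multiset.card (B.val.filter fun y => -x + y ∈ H)) := by
        apply Multiset.map_congr rfl
        intro B _
        rw [Multiset.count_bind, ← sum_count_coset H B.val x]
        congr 1
        apply Multiset.map_congr rfl
        intro h _
        rw [himg B h, count_map_add]
      rw [this, ← hres x, filter_bind', Multiset.card_bind]
      rfl
    rw [h1, Finset.filter_val, Multiset.count_filter]
    split_ifs <;> simp
  · intro g hg
    rw [Multiset.add_bind, Multiset.singleton_bind, Multiset.count_add,
      Multiset.bind_assoc]
    simp only [Multiset.bind_map]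
    have h1 : ((F.bind fun B => (Finset.univ.filter fun h => h ∈ H).val.bind
        fun h => mDiffs (B.image (· + h)).val).count g)
        = (Finset.univ.filter fun h => h ∈ H).card * (if g ∈ H then 0 else 1) := by
      rw [Multiset.count_bind]
      have : F.map (fun B => ((Finset.univ.filter fun h => h ∈ H).val.bind
          fun h => mDiffs (B.image (· + h)).val).count g)
          = F.map (fun B => (Finset.univ.filter fun h => h ∈ H).card *
              (mDiffs B.val).count g) := by
        apply Multiset.map_congr rfl
        intro B _
        rw [Multiset.count_bind]
        have : ((Finset.univ.filter fun h => h ∈ H).val.map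
            fun h => (mDiffs (B.image (· + h)).val).count g)
            = ((Finset.univ.filter fun h => h ∈ H).val.map
              fun _ => (mDiffs B.val).count g) := by
          apply Multiset.map_congr rfl
          intro h _
          rw [himg B h, mDiffs_map_add]
        rw [this, Multiset.map_const', Multiset.sum_replicate, smul_eq_mul]
        rfl
      rw [this, Multiset.sum_map_mul_left, ← Multiset.count_bind, hDF g]
    rw [h1, count_mDiffs_subgroup H hg, hcardH]
    split_ifs <;> simp
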